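/- Let q ≥ 2 and let p be a positive integer, and set m = pq. The code All(pq,q) in H(pq,q), consisting of all vertices in which every letter of the alphabet occurs exactly p times, is neighbour transitive, has automorphism group Aut(All(pq,q)) = Diag_m(S_q) ⋊ L, and has minimum distance δ = 2. -/

import Mathlib

open Equiv Pointwise

section HammingDefs

variable {I : Type*} [Fintype I] [DecidableEq I] {q : ℕ}

/-- The permutation of the vertex set of the Hamming graph `H(I,q)` induced by the
letter permutations `g i` (acting coordinatewise) followed by the coordinate
permutation `σ`:  `(α^x)_i = g_{σ⁻¹ i} (α_{σ⁻¹ i})`. -/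
def tvp (g : I → Equiv.Perm (Fin q)) (σ : Equiv.Perm I) : Equiv.Perm (I → Fin q) where
  toFun α i := g (σ⁻¹ i) (α (σ⁻¹ i))
  invFun β i := (g i)⁻¹ (β (σ i))
  left_inv α := by funext i; simp
  right_inv β := by funext i; simp

/-- The automorphism group of the Hamming graph `H(I,q)`: all permutations of the
vertex set preserving adjacency (Hamming distance 1). -/
def autH (I : Type*) [Fintype I] [DecidableEq I] (q : ℕ) :
    Subgroup (Equiv.Perm (I → Fin q)) where
  carrier := {y | ∀ α β : I → Fin q, hammingDist (y α) (y β) = 1 ↔ hammingDist α β = 1}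
  one_mem' := by intro α β; simp
  mul_mem' := by
    intro a b ha hb α β
    rw [Equiv.Perm.mul_apply, Equiv.Perm.mul_apply, ha, hb]
  inv_mem' := by
    intro a ha α β
    simpa using (ha (a⁻¹ α) (a⁻¹ β)).symm

/-- The homomorphism `S_q × S_I → Sym(V(H(I,q)))` whose image is `Diag(S_q) ⋊ L`. -/
def diagLHom (I : Type*) [Fintype I] [DecidableEq I] (q : ℕ) :
    Equiv.Perm (Fin q) × Equiv.Perm I →* Equiv.Perm (I → Fin q) where
  toFun x := tvp (fun _ => x.1) x.2
  map_one' := by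
    ext α i
    simp [tvp]
  map_mul' x y := by
    ext α i
    simp [tvp, mul_inv_rev]

/-- The subgroup `Diag_I(S_q) ⋊ L` of the automorphism group of `H(I,q)`. -/
def diagL (I : Type*) [Fintype I] [DecidableEq I] (q : ℕ) :
    Subgroup (Equiv.Perm (I → Fin q)) :=
  (diagLHom I q).range

/-- The subgroup `L` of pure coordinate permutations of `H(I,q)`. -/
def permL (I : Type*) [Fintype I] [DecidableEq I] (q : ℕ) :
    Subgroup (Equiv.Perm (I → Fin q)) :=
  ((diagLHom I q).comp (MonoidHom.inr (Equiv.Perm (Fin q)) (Equiv.Perm I))).range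

/-- Distance from a vertex to a code. -/
noncomputable def distC (γ : I → Fin q) (C : Set (I → Fin q)) : ℕ :=
  sInf {d | ∃ β ∈ C, hammingDist γ β = d}

/-- The cell `C_i` of the distance partition of the code `C`. -/
def cell (C : Set (I → Fin q)) (i : ℕ) : Set (I → Fin q) :=
  {γ | distC γ C = i}

/-- The covering radius of the code `C`. -/
noncomputable def covRad (C : Set (I → Fin q)) : ℕ :=
  sSup {d | ∃ γ : I → Fin q, distC γ C = d}

/-- The minimum distance of the code `C`. -/
noncomputable def minDist (C : Set (I → Fin q)) : ℕ :=
  sInf {d | ∃ β ∈ C, ∃ γ ∈ C, β ≠ γ ∧ hammingDist β γ = d}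

/-- `S` is an orbit of the subgroup `X` of permutations of the vertex set. -/
def IsOrbitOf (X : Subgroup (Equiv.Perm (I → Fin q))) (S : Set (I → Fin q)) : Prop :=
  ∃ v, S = {w | ∃ x ∈ X, x v = w}

/-- `C` is `X`-neighbour transitive: `X` is a group of automorphisms of the Hamming
graph, and both `C` and its set of neighbours `C_1` are `X`-orbits. -/
def NbrTransitive (X : Subgroup (Equiv.Perm (I → Fin q))) (C : Set (I → Fin q)) : Prop :=
  X ≤ autH I q ∧ IsOrbitOf X C ∧ IsOrbitOf X (cell C 1)

/-- `C` is `X`-completely transitive: every cell of the distance partition is an `X`-orbit. -/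
def ComplTransitive (X : Subgroup (Equiv.Perm (I → Fin q))) (C : Set (I → Fin q)) : Prop :=
  X ≤ autH I q ∧ ∀ i ≤ covRad C, IsOrbitOf X (cell C i)

/-- `C` is diagonally `X`-neighbour transitive. -/
def DiagNbrTransitive (X : Subgroup (Equiv.Perm (I → Fin q))) (C : Set (I → Fin q)) : Prop :=
  NbrTransitive X C ∧ X ≤ diagL I q

/-- The automorphism group of the code `C`: the setwise stabiliser of `C` in the
automorphism group of the Hamming graph. -/
def autCode (C : Set (I → Fin q)) : Subgroup (Equiv.Perm (I → Fin q)) :=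
  autH I q ⊓ MulAction.stabilizer (Equiv.Perm (I → Fin q)) C

/-- Number of occurrences of the letter `a` in the vertex `α`. -/
def cnt (α : I → Fin q) (a : Fin q) : ℕ :=
  (Finset.univ.filter fun i => α i = a).card

/-- The composition `Q(α)` of a vertex: the set of pairs `(a, p)` such that the letter `a`
occurs exactly `p > 0` times in `α`. -/
def compOf (α : I → Fin q) : Set (Fin q × ℕ) :=
  {x | 0 < x.2 ∧ cnt α x.1 = x.2}

/-- `Num(α)`: the set of pairs `(p, s)` such that exactly `s > 0` distinct letters occur
exactly `p > 0` times in `α`. -/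
def numOf (α : I → Fin q) : Set (ℕ × ℕ) :=
  {x | 0 < x.1 ∧ 0 < x.2 ∧ (Finset.univ.filter fun a => cnt α a = x.1).card = x.2}

/-- The repetition code `Rep(I,q)`. -/
def repCode (I : Type*) [Fintype I] [DecidableEq I] (q : ℕ) : Set (I → Fin q) :=
  {α | ∃ a, α = fun _ => a}

/-- The injection code `Inj(I,q)`: all tuples with pairwise distinct entries. -/
def injCode (I : Type*) [Fintype I] [DecidableEq I] (q : ℕ) : Set (I → Fin q) :=
  {α | Function.Injective α}

/-- The code `All(pq,q)`: all vertices in which every letter occurs exactly `p` times. -/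
def allCode (I : Type*) [Fintype I] [DecidableEq I] (q p : ℕ) : Set (I → Fin q) :=
  {α | ∀ a, cnt α a = p}

/-- `C` is `s`-regular. -/
def RegularUpTo (C : Set (I → Fin q)) (s : ℕ) : Prop :=
  ∀ i ≤ s, ∀ γ ∈ cell C i, ∀ γ' ∈ cell C i, ∀ k : ℕ,
    {β ∈ C | hammingDist γ β = k}.ncard = {β ∈ C | hammingDist γ' β = k}.ncard

/-- `C` is completely regular. -/
def ComplRegular (C : Set (I → Fin q)) : Prop :=
  RegularUpTo C (covRad C)

/-- `C` is a constant composition code: every letter occurs the same positive number of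
times in every codeword. -/
def IsCCC (C : Set (I → Fin q)) : Prop :=
  C.Nonempty ∧ ∃ f : Fin q → ℕ, (∀ a, 0 < f a) ∧ ∀ β ∈ C, ∀ a, cnt β a = f a

end HammingDefs

section Weight

/-- The weight of a binary vertex: number of nonzero entries. -/
def wt {m : ℕ} (α : Fin m → Fin 2) : ℕ :=
  (Finset.univ.filter fun i => α i ≠ 0).card

/-- The code `W([m/2],2)`: binary `m`-tuples of weight `(m+1)/2` or `(m-1)/2`. -/
def wCode (m : ℕ) : Set (Fin m → Fin 2) :=
  {α | wt α = (m+1)/2 ∨ wt α = (m-1)/2}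

/-- The code `W([m/2],2)` over a general alphabet (used when `q = 2`): vertices in which
one letter occurs `(m+1)/2` times and another `(m-1)/2` times. -/
def wCodeGen (m q : ℕ) : Set (Fin m → Fin q) :=
  {α | ∃ a b : Fin q, a ≠ b ∧ cnt α a = (m+1)/2 ∧ cnt α b = (m-1)/2}

end Weight

section PermCodes

/-- The vertex `α(g) = (1^g, …, q^g)` of `H(q,q)` associated with a permutation `g`. -/
def alphaVtx {q : ℕ} (g : Equiv.Perm (Fin q)) : Fin q → Fin q := fun i => g i

/-- The permutation code generated by a set `T` of permutations. -/
def permCode {q : ℕ} (T : Set (Equiv.Perm (Fin q))) : Set (Fin q → Fin q) :=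
  alphaVtx '' T

end PermCodes

section Repetition

variable {I : Type*} [Fintype I] [DecidableEq I] {q : ℕ}

/-- The `p`-fold repetition `rep_p(α) = (α,…,α)`, a vertex of `H(p·|I|, q)`. -/
def repv (p : ℕ) (α : I → Fin q) : Fin p × I → Fin q := fun ji => α ji.2

/-- The `p`-fold repetition code `Rep_p(C)`. -/
def repCodeP (p : ℕ) (C : Set (I → Fin q)) : Set (Fin p × I → Fin q) :=
  repv p '' C

/-- The homomorphism `Sym(V(H(I,q))) × S_p → Sym(V(H(p·|I|,q)))`: the pair `(x,σ)` acts on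
`p`-tuples of vertices by `(α_1,…,α_p) ↦ (α_{σ⁻¹(1)}^x, …, α_{σ⁻¹(p)}^x)`. -/
def repHom (p : ℕ) (I : Type*) [Fintype I] [DecidableEq I] (q : ℕ) :
    Equiv.Perm (I → Fin q) × Equiv.Perm (Fin p) →* Equiv.Perm (Fin p × I → Fin q) where
  toFun x :=
    { toFun := fun β ji => x.1 (fun i => β (x.2⁻¹ ji.1, i)) ji.2
      invFun := fun β ji => x.1⁻¹ (fun i => β (x.2 ji.1, i)) ji.2
      left_inv := by intro β; funext ji; simp
      right_inv := by intro β; funext ji; simp }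
  map_one' := by ext β ji; simp
  map_mul' x y := by ext β ji; simp [mul_inv_rev]

end Repetition
set_option linter.unusedSectionVars false
section Aux
open Finset Function
variable {I : Type*} [Fintype I] [DecidableEq I] {q : ℕ}

lemma hd_def (x y : I → Fin q) :
    hammingDist x y = (Finset.univ.filter fun i => x i ≠ y i).card := rfl

lemma hd_comp_equiv (x y : I → Fin q) (e : Equiv.Perm I) :
    hammingDist (fun i => x (e i)) (fun i => y (e i)) = hammingDist x y := by
  rw [hd_def, hd_def]
  apply Finset.card_bij (fun i _ => e i)
  · intro a ha; simp_all
  · intro a _ b _ hab; exact e.injective hab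
  · intro b hb; exact ⟨e.symm b, by simp_all, by simp⟩

lemma hd_update_eq_one {α : I → Fin q} {i : I} {c : Fin q} (h : c ≠ α i) :
    hammingDist (Function.update α i c) α = 1 := by
  rw [hd_def]
  rw [show (Finset.univ.filter fun j => Function.update α i c j ≠ α j) = {i} by
    ext j
    rcases eq_or_ne j i with rfl | hj
    · simpa using h
    · simp [Function.update_of_ne hj, hj]]
  simp

lemma hd_eq_one_iff {α β : I → Fin q} :
    hammingDist α β = 1 ↔ ∃ i, α i ≠ β i ∧ ∀ j ≠ i, α j = β j := by
  rw [hd_def, Finset.card_eq_one]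
  constructor
  · rintro ⟨i, hi⟩
    have h1 : i ∈ Finset.univ.filter fun j => α j ≠ β j := hi ▸ Finset.mem_singleton_self i
    refine ⟨i, by simpa using h1, fun j hj => ?_⟩
    by_contra hne
    have : j ∈ ({i} : Finset I) := hi ▸ (by simpa using hne)
    simp_all
  · rintro ⟨i, hi, hall⟩
    exact ⟨i, by ext j; rcases eq_or_ne j i with rfl | hj <;> simp_all⟩

/-- Step decomposition towards a base point. -/
lemma exists_step {α₀ α : I → Fin q} {k : ℕ} (h : hammingDist α₀ α = k + 1) :
    ∃ (α' : I → Fin q) (i₀ : I), hammingDist α₀ α' = k ∧ α' i₀ = α₀ i₀ ∧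
      α i₀ ≠ α' i₀ ∧ α = Function.update α' i₀ (α i₀) := by
  have hne : (Finset.univ.filter fun j => α₀ j ≠ α j).Nonempty := by
    rw [← Finset.card_pos, ← hd_def, h]; omega
  obtain ⟨i₀, hi₀⟩ := hne
  have hd0 : α₀ i₀ ≠ α i₀ := by simpa using hi₀
  refine ⟨Function.update α i₀ (α₀ i₀), i₀, ?_, by simp, by simpa using Ne.symm hd0, ?_⟩
  · rw [hd_def]
    rw [show (Finset.univ.filter fun j => α₀ j ≠ Function.update α i₀ (α₀ i₀) j)
        = (Finset.univ.filter fun j => α₀ j ≠ α j).erase i₀ by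
      ext j
      rcases eq_or_ne j i₀ with rfl | hj
      · simp
      · simp [Function.update_of_ne hj, hj]]
    rw [Finset.card_erase_of_mem hi₀, ← hd_def, h]
    omega
  · rw [Function.update_idem, Function.update_eq_self]

lemma cnt_comp_equiv (α : I → Fin q) (e : Equiv.Perm I) (a : Fin q) :
    cnt (fun i => α (e i)) a = cnt α a := by
  unfold cnt
  apply Finset.card_bij (fun i _ => e i)
  · intro i hi; simp_all
  · intro i _ j _ hij; exact e.injective hij
  · intro j hj; exact ⟨e.symm j, by simp_all, by simp⟩

lemma cnt_postcomp (α : I → Fin q) (h : Equiv.Perm (Fin q)) (a : Fin q) :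
    cnt (fun i => h (α i)) a = cnt α (h⁻¹ a) := by
  unfold cnt
  congr 1
  ext i
  simp only [Finset.mem_filter, Finset.mem_univ, true_and]
  constructor
  · intro hh; simp [← hh]
  · intro hh; simp [hh]

lemma cnt_update_self {α : I → Fin q} {i : I} {c : Fin q} (h : c ≠ α i) :
    cnt (Function.update α i c) c = cnt α c + 1 := by
  unfold cnt
  rw [show (Finset.univ.filter fun j => Function.update α i c j = c)
      = insert i (Finset.univ.filter fun j => α j = c) by
    ext j
    rcases eq_or_ne j i with rfl | hj
    · simp
    · simp [Function.update_of_ne hj, hj]]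
  rw [Finset.card_insert_of_notMem (by simpa using fun hc : α i = c => h hc.symm)]

lemma cnt_update_old {α : I → Fin q} {i : I} {c : Fin q} (h : c ≠ α i) :
    cnt (Function.update α i c) (α i) + 1 = cnt α (α i) := by
  unfold cnt
  rw [show (Finset.univ.filter fun j => α j = α i)
      = insert i (Finset.univ.filter fun j => Function.update α i c j = α i) by
    ext j
    rcases eq_or_ne j i with rfl | hj
    · simp
    · simp [Function.update_of_ne hj, hj]]
  rw [Finset.card_insert_of_notMem (by simp [h])]

lemma cnt_update_other {α : I → Fin q} {i : I} {c : Fin q} {a : Fin q}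
    (h1 : a ≠ c) (h2 : a ≠ α i) :
    cnt (Function.update α i c) a = cnt α a := by
  unfold cnt
  congr 1
  ext j
  rcases eq_or_ne j i with rfl | hj
  · simp [Ne.symm h1, Ne.symm h2]
  · simp [Function.update_of_ne hj]

/-- If two tuples have the same letter counts then one is a coordinate permutation
of the other. -/
lemma exists_perm_of_cnt_eq {α β : I → Fin q} (h : ∀ a, cnt α a = cnt β a) :
    ∃ e : Equiv.Perm I, ∀ i, α (e i) = β i := by
  have hcard : ∀ a : Fin q, Fintype.card {i // β i = a} = Fintype.card {i // α i = a} := by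
    intro a
    rw [Fintype.card_subtype, Fintype.card_subtype]
    exact ((h a).symm : cnt β a = cnt α a)
  have e2 : ∀ a : Fin q, {i // β i = a} ≃ {i // α i = a} :=
    fun a => Fintype.equivOfCardEq (hcard a)
  refine ⟨((Equiv.sigmaFiberEquiv β).symm.trans
    ((Equiv.sigmaCongrRight e2).trans (Equiv.sigmaFiberEquiv α))), fun i => ?_⟩
  simp only [Equiv.trans_apply, Equiv.sigmaFiberEquiv, Equiv.coe_fn_symm_mk,
    Equiv.sigmaCongrRight_apply, Equiv.coe_fn_mk, Sigma.map]
  exact (e2 (β i) ⟨i, rfl⟩).2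

/-- Extend a pair of distinct points to a permutation. -/
lemma exists_perm_pair {X : Type*} [DecidableEq X] {a b c d : X} (hab : a ≠ b) (hcd : c ≠ d) :
    ∃ τ : Equiv.Perm X, τ a = c ∧ τ b = d := by
  refine ⟨(Equiv.swap (Equiv.swap a c b) d) * Equiv.swap a c, ?_, ?_⟩
  · have h1 : Equiv.swap a c b ≠ c := fun h =>
      hab ((Equiv.swap a c).injective ((Equiv.swap_apply_left a c).trans h.symm))
    simp only [Equiv.Perm.mul_apply, Equiv.swap_apply_left]
    exact Equiv.swap_apply_of_ne_of_ne (Ne.symm h1) hcd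
  · simp only [Equiv.Perm.mul_apply, Equiv.swap_apply_left]

end Aux

section Aux2
open Finset Function
variable {I : Type*} [Fintype I] [DecidableEq I] {q : ℕ}

lemma tvp_apply (g : I → Equiv.Perm (Fin q)) (σ : Equiv.Perm I) (α : I → Fin q) (i : I) :
    tvp g σ α i = g (σ⁻¹ i) (α (σ⁻¹ i)) := rfl

lemma tvp_isometry (g : I → Equiv.Perm (Fin q)) (σ : Equiv.Perm I) (α β : I → Fin q) :
    hammingDist (tvp g σ α) (tvp g σ β) = hammingDist α β := by
  have happ : ∀ γ i, tvp g σ γ i = g (σ⁻¹ i) (γ (σ⁻¹ i)) := fun _ _ => rfl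
  rw [hd_def, hd_def]
  apply Finset.card_bij (fun i _ => σ⁻¹ i)
  · intro i hi
    simp only [Finset.mem_filter, Finset.mem_univ, true_and, happ] at hi ⊢
    exact fun h => hi (h ▸ rfl)
  · intro i _ j _ hij; exact σ⁻¹.injective hij
  · intro j hj
    refine ⟨σ j, Finset.mem_filter.mpr ⟨Finset.mem_univ _, ?_⟩, by simp⟩
    simp only [Finset.mem_filter, Finset.mem_univ, true_and] at hj
    simp only [happ, Equiv.Perm.inv_def, Equiv.symm_apply_apply]
    exact fun h => hj ((g j).injective h)

lemma diagLHom_apply (x : Equiv.Perm (Fin q) × Equiv.Perm I) :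
    diagLHom I q x = tvp (fun _ => x.1) x.2 := rfl

lemma diagL_le_autH : diagL I q ≤ autH I q := by
  rintro x ⟨z, rfl⟩
  intro α β
  rw [diagLHom_apply, tvp_isometry]

lemma mem_autH_iff (y : Equiv.Perm (I → Fin q)) :
    y ∈ autH I q ↔ ∀ α β : I → Fin q, hammingDist (y α) (y β) = 1 ↔ hammingDist α β = 1 :=
  Iff.rfl

lemma autH_isometry {y : Equiv.Perm (I → Fin q)} (hy : y ∈ autH I q) (α β : I → Fin q) :
    hammingDist (y α) (y β) = hammingDist α β := by
  have key : ∀ (z : Equiv.Perm (I → Fin q)), z ∈ autH I q →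
      ∀ (n : ℕ) (α β : I → Fin q), hammingDist α β ≤ n → hammingDist (z α) (z β) ≤ n := by
    intro z hz n
    induction n with
    | zero =>
      intro α β hab
      have : α = β := hammingDist_eq_zero.mp (Nat.le_zero.mp hab)
      simp [this]
    | succ n ih =>
      intro α β hab
      rcases Nat.lt_or_ge (hammingDist α β) (n+1) with hlt | hge
      · exact (ih α β (by omega)).trans (by omega)
      · have heq : hammingDist α β = n + 1 := le_antisymm hab hge
        obtain ⟨β', i₀, hd', _, hne, hupd⟩ := exists_step heq
        have h1 : hammingDist β β' = 1 := by
          rw [hupd]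
          exact hd_update_eq_one (by rw [hupd] at hne; simpa using hne)
        have hz1 : hammingDist (z β) (z β') = 1 := (hz β β').mpr h1
        calc hammingDist (z α) (z β) ≤ hammingDist (z α) (z β') + hammingDist (z β') (z β) :=
              hammingDist_triangle _ _ _
          _ ≤ n + 1 := by
              have := ih α β' (le_of_eq hd')
              rw [hammingDist_comm] at hz1
              omega
  have h1 : hammingDist (y α) (y β) ≤ hammingDist α β := key y hy _ α β le_rfl
  have h2 : hammingDist α β ≤ hammingDist (y α) (y β) := by
    have := key y⁻¹ ((autH I q).inv_mem hy) _ (y α) (y β) le_rfl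
    simpa using this
  omega

lemma mem_diagL_iff (x : Equiv.Perm (I → Fin q)) :
    x ∈ diagL I q ↔ ∃ (h : Equiv.Perm (Fin q)) (σ : Equiv.Perm I), x = tvp (fun _ => h) σ := by
  constructor
  · rintro ⟨⟨h, σ⟩, rfl⟩; exact ⟨h, σ, rfl⟩
  · rintro ⟨h, σ, rfl⟩; exact ⟨(h, σ), rfl⟩

lemma cnt_tvp (h : Equiv.Perm (Fin q)) (σ : Equiv.Perm I) (α : I → Fin q) (a : Fin q) :
    cnt (tvp (fun _ => h) σ α) a = cnt α (h⁻¹ a) := by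
  have happ : ∀ γ i, tvp (fun _ => h) σ γ i = h (γ (σ⁻¹ i)) := fun _ _ => rfl
  unfold cnt
  apply Finset.card_bij (fun i _ => σ⁻¹ i)
  · intro i hi
    simp only [Finset.mem_filter, Finset.mem_univ, true_and, happ] at hi ⊢
    rw [← hi]; simp
  · intro i _ j _ hij; exact σ⁻¹.injective hij
  · intro j hj
    refine ⟨σ j, Finset.mem_filter.mpr ⟨Finset.mem_univ _, ?_⟩, by simp⟩
    simp only [Finset.mem_filter, Finset.mem_univ, true_and] at hj
    simp only [happ, Equiv.Perm.inv_def, Equiv.symm_apply_apply, hj]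
    simp

lemma mem_allCode_iff (p : ℕ) (α : I → Fin q) :
    α ∈ allCode I q p ↔ ∀ a, cnt α a = p := Iff.rfl

lemma allCode_tvp_mem {p : ℕ} (h : Equiv.Perm (Fin q)) (σ : Equiv.Perm I)
    {α : I → Fin q} (hα : α ∈ allCode I q p) :
    tvp (fun _ => h) σ α ∈ allCode I q p := by
  intro a
  rw [cnt_tvp]
  exact hα _

lemma allCode_mem_of_diagL {p : ℕ} {x : Equiv.Perm (I → Fin q)} (hx : x ∈ diagL I q)
    {α : I → Fin q} (hα : α ∈ allCode I q p) : x α ∈ allCode I q p := by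
  obtain ⟨h, σ, rfl⟩ := (mem_diagL_iff x).mp hx
  exact allCode_tvp_mem h σ hα

end Aux2

section Aux3
open Finset Function
variable {I : Type*} [Fintype I] [DecidableEq I] {q : ℕ}

/-- A letter different from `a`, when `q ≥ 2`. -/
def otherL (hq : 2 ≤ q) (a : Fin q) : Fin q :=
  if a = ⟨0, by omega⟩ then ⟨1, by omega⟩ else ⟨0, by omega⟩

lemma otherL_ne (hq : 2 ≤ q) (a : Fin q) : otherL hq a ≠ a := by
  unfold otherL
  split
  · subst ‹a = _›; intro h; exact absurd (congrArg Fin.val h) (by simp)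
  · intro h; exact ‹¬ _› h.symm

lemma two_le_hd {α β : I → Fin q} {i j : I} (hij : i ≠ j)
    (hi : α i ≠ β i) (hj : α j ≠ β j) : 2 ≤ hammingDist α β := by
  rw [hd_def]
  have hsub : ({i, j} : Finset I) ⊆ Finset.univ.filter fun k => α k ≠ β k := by
    intro k hk
    simp only [Finset.mem_insert, Finset.mem_singleton] at hk
    rcases hk with rfl | rfl <;> simp_all
  calc 2 = ({i, j} : Finset I).card := by
        rw [Finset.card_insert_of_notMem (by simpa using hij), Finset.card_singleton]
    _ ≤ _ := Finset.card_le_card hsub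

/-- Classification of Hamming isometries: every isometry of `H(I,q)`, `q ≥ 2`,
is induced by a coordinate permutation and letter permutations. -/
lemma isometry_classify (hq : 2 ≤ q) (y : Equiv.Perm (I → Fin q))
    (hy : ∀ α β, hammingDist (y α) (y β) = hammingDist α β) :
    ∃ (g : I → Equiv.Perm (Fin q)) (σ : Equiv.Perm I), y = tvp g σ := by
  classical
  -- Key A: the coordinate where the image of a one-coordinate update differs.
  have keyA : ∀ (α : I → Fin q) (i : I), ∃ j, ∀ c, c ≠ α i →
      ((y (Function.update α i c)) j ≠ (y α) j ∧
        ∀ k, k ≠ j → y (Function.update α i c) k = y α k) := by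
    intro α i
    have hc₀ne : otherL hq (α i) ≠ α i := otherL_ne hq (α i)
    have hd1 : hammingDist (y (Function.update α i (otherL hq (α i)))) (y α) = 1 := by
      rw [hy]; exact hd_update_eq_one hc₀ne
    obtain ⟨j, hj1, hj2⟩ := hd_eq_one_iff.mp hd1
    refine ⟨j, fun c hc => ?_⟩
    rcases eq_or_ne c (otherL hq (α i)) with rfl | hcc₀
    · exact ⟨hj1, hj2⟩
    · have hd1' : hammingDist (y (Function.update α i c)) (y α) = 1 := by
        rw [hy]; exact hd_update_eq_one hc
      obtain ⟨j', hj1', hj2'⟩ := hd_eq_one_iff.mp hd1'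
      have hjj : j' = j := by
        by_contra hne
        have hdist : hammingDist (Function.update α i c)
            (Function.update α i (otherL hq (α i))) = 1 := by
          rw [show Function.update α i c
              = Function.update (Function.update α i (otherL hq (α i))) i c by
            rw [Function.update_idem]]
          exact hd_update_eq_one (by simpa using hcc₀)
        have him : hammingDist (y (Function.update α i c))
            (y (Function.update α i (otherL hq (α i)))) = 1 := by
          rw [hy]; exact hdist
        have h2 : 2 ≤ hammingDist (y (Function.update α i c))
            (y (Function.update α i (otherL hq (α i)))) := by
          apply two_le_hd hne
          · rw [hj2 j' hne]; exact hj1'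
          · rw [hj2' j (Ne.symm hne)]; exact Ne.symm hj1
        omega
      subst hjj
      exact ⟨hj1', hj2'⟩
  choose J hJ using keyA
  -- J α is injective.
  have Jinj : ∀ α, Function.Injective (J α) := by
    intro α i i' hii
    by_contra hne
    have h1 := hJ α i (otherL hq (α i)) (otherL_ne hq (α i))
    have h2 := hJ α i' (otherL hq (α i')) (otherL_ne hq (α i'))
    have h2d : 2 ≤ hammingDist (Function.update α i (otherL hq (α i)))
        (Function.update α i' (otherL hq (α i'))) := by
      apply two_le_hd hne
      · rw [Function.update_self, Function.update_of_ne hne]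
        exact otherL_ne hq (α i)
      · rw [Function.update_of_ne (Ne.symm hne), Function.update_self]
        exact Ne.symm (otherL_ne hq (α i'))
    have him : 2 ≤ hammingDist (y (Function.update α i (otherL hq (α i))))
        (y (Function.update α i' (otherL hq (α i')))) := by
      rw [hy]; exact h2d
    have hagree : ∀ k, k ≠ J α i →
        y (Function.update α i (otherL hq (α i))) k
          = y (Function.update α i' (otherL hq (α i'))) k := by
      intro k hk
      rw [h1.2 k hk, h2.2 k (hii ▸ hk)]
    have hle : hammingDist (y (Function.update α i (otherL hq (α i))))
        (y (Function.update α i' (otherL hq (α i')))) ≤ 1 := by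
      rw [hd_def]
      calc _ ≤ ({J α i} : Finset I).card := by
            apply Finset.card_le_card
            intro k hk
            simp only [Finset.mem_filter, Finset.mem_univ, true_and] at hk
            simp only [Finset.mem_singleton]
            by_contra hkk
            exact hk (hagree k hkk)
        _ = 1 := Finset.card_singleton _
    omega
  -- J is invariant under one-coordinate updates.
  have Jadj : ∀ (α : I → Fin q) (k : I) (b : Fin q), b ≠ α k →
      J (Function.update α k b) = J α := by
    intro α k b hb
    funext i
    set β := Function.update α k b with hβ
    have hJK : J β k = J α k := by
      have h1 := hJ β k (α k) (by rw [hβ, Function.update_self]; exact Ne.symm hb)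
      have h2 := hJ α k b hb
      have hupdback : Function.update β k (α k) = α := by
        rw [hβ, Function.update_idem, Function.update_eq_self]
      rw [hupdback] at h1
      by_contra hne
      exact h1.1 (h2.2 (J β k) hne).symm
    rcases eq_or_ne i k with rfl | hik
    · exact hJK
    · by_contra hne
      have hsr : J α i ≠ J α k := fun h => hik (Jinj α h)
      have htr : J β i ≠ J α k := fun h => hik (Jinj β (h.trans hJK.symm))
      have hci : otherL hq (α i) ≠ α i := otherL_ne hq (α i)
      have hcβ : otherL hq (α i) ≠ β i := by
        rw [hβ, Function.update_of_ne hik]; exact hci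
      have h2 := hJ α k b hb
      have hγ := hJ α i (otherL hq (α i)) hci
      have hγ' := hJ β i (otherL hq (α i)) hcβ
      have hγcomm : Function.update β i (otherL hq (α i))
          = Function.update (Function.update α i (otherL hq (α i))) k b := by
        rw [hβ, Function.update_comm (Ne.symm hik)]
      have hbne : b ≠ Function.update α i (otherL hq (α i)) k := by
        rw [Function.update_of_ne (Ne.symm hik)]; exact hb
      have hdist1 : hammingDist (y (Function.update β i (otherL hq (α i))))
          (y (Function.update α i (otherL hq (α i)))) = 1 := by
        rw [hy, hγcomm]
        exact hd_update_eq_one hbne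
      have hdiffr : y (Function.update β i (otherL hq (α i))) (J α k)
          ≠ y (Function.update α i (otherL hq (α i))) (J α k) := by
        rw [hγ'.2 (J α k) (Ne.symm htr), hγ.2 (J α k) (Ne.symm hsr)]
        exact h2.1
      have hdiffs : y (Function.update β i (otherL hq (α i))) (J α i)
          ≠ y (Function.update α i (otherL hq (α i))) (J α i) := by
        have hst : J α i ≠ J β i := fun h => hne h.symm
        rw [hγ'.2 (J α i) hst]
        have hyβs : y β (J α i) = y α (J α i) := h2.2 (J α i) hsr
        rw [hyβs]
        exact Ne.symm hγ.1
      have := two_le_hd (Ne.symm hsr) hdiffr hdiffs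
      omega
  -- J is globally constant.
  have Jconst : ∀ α β : I → Fin q, J α = J β := by
    have key : ∀ (n : ℕ) (α β : I → Fin q), hammingDist α β = n → J α = J β := by
      intro n
      induction n with
      | zero => intro α β h; rw [hammingDist_eq_zero.mp h]
      | succ n ih =>
        intro α β h
        obtain ⟨β', i₀, hd', _, hne, hupd⟩ := exists_step h
        rw [hupd, Jadj β' i₀ (β i₀) (by rw [hupd] at hne; simpa using hne)]
        exact ih α β' hd'
    intro α β
    exact key (hammingDist α β) α β rfl
  -- the update formula.
  have Lupd : ∀ (α : I → Fin q) (i : I) (c : Fin q),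
      y (Function.update α i c) =
        Function.update (y α) (J α i) (y (Function.update α i c) (J α i)) := by
    intro α i c
    rcases eq_or_ne c (α i) with rfl | hc
    · rw [Function.update_eq_self, Function.update_eq_self]
    · funext k
      rcases eq_or_ne k (J α i) with rfl | hk
      · rw [Function.update_self]
      · rw [Function.update_of_ne hk, (hJ α i c hc).2 k hk]
  -- base point and the data.
  set base : I → Fin q := fun _ => ⟨0, by omega⟩ with hbase
  set σ0 : I → I := J base with hσ0
  have hσ0bij : Function.Bijective σ0 := Finite.injective_iff_bijective.mp (Jinj base)
  set g0 : I → Fin q → Fin q := fun i c => y (Function.update base i c) (σ0 i) with hg0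
  -- independence of the letter map from the base point.
  have Lval : ∀ (α β : I → Fin q) (i : I) (c : Fin q),
      y (Function.update α i c) (σ0 i) = y (Function.update β i c) (σ0 i) := by
    have key : ∀ (n : ℕ) (α β : I → Fin q), hammingDist α β = n → ∀ i c,
        y (Function.update α i c) (σ0 i) = y (Function.update β i c) (σ0 i) := by
      intro n
      induction n with
      | zero => intro α β h i c; rw [hammingDist_eq_zero.mp h]
      | succ n ih =>
        intro α β h i c
        obtain ⟨β', k, hd', _, hne, hupd⟩ := exists_step h
        have hneq : β k ≠ β' k := by rw [hupd]; simp only [Function.update_self]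
                                     rw [hupd] at hne; simpa using hne
        have step : y (Function.update β' i c) (σ0 i) = y (Function.update β i c) (σ0 i) := by
          rcases eq_or_ne k i with rfl | hki
          · rw [hupd, Function.update_idem]
          · have hcomm : Function.update β i c
                = Function.update (Function.update β' i c) k (β k) := by
              conv_lhs => rw [hupd]
              rw [Function.update_comm hki.symm]
            have hbk : β k ≠ Function.update β' i c k := by
              rw [Function.update_of_ne hki]
              rw [hupd] at hne; simpa using hne
            have hJeq : J (Function.update β' i c) k = σ0 k :=
              congrFun (Jconst (Function.update β' i c) base) k
            have hne2 : σ0 i ≠ J (Function.update β' i c) k := by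
              rw [hJeq]
              exact fun hcon => hki ((Jinj base hcon).symm)
            have hstep := (hJ (Function.update β' i c) k (β k) hbk).2 (σ0 i) hne2
            rw [hcomm]
            exact hstep.symm
        rw [← step]
        exact ih α β' hd' i c
    intro α β i c
    exact key (hammingDist α β) α β rfl i c
  -- the main formula.
  have main : ∀ (α : I → Fin q) (i : I), y α (σ0 i) = g0 i (α i) := by
    have key : ∀ (n : ℕ) (α : I → Fin q), hammingDist base α = n →
        ∀ i, y α (σ0 i) = g0 i (α i) := by
      intro n
      induction n with
      | zero =>
        intro α h i
        obtain rfl : base = α := hammingDist_eq_zero.mp h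
        show y base (σ0 i) = y (Function.update base i (base i)) (σ0 i)
        rw [Function.update_eq_self]
      | succ n ih =>
        intro α h i
        obtain ⟨α', i₀, hd', hsame, hne, hupd⟩ := exists_step h
        have hval : α i₀ ≠ α' i₀ := by rw [hupd] at hne; simpa using hne
        have hJα' : J α' = σ0 := Jconst α' base
        rcases eq_or_ne i i₀ with rfl | hii
        · rw [hupd]
          have hv := Lval α' base i (α i)
          rw [hv]
          show y (Function.update base i (α i)) (σ0 i)
            = g0 i (Function.update α' i (α i) i)
          rw [Function.update_self]
        · rw [hupd]
          have hupdeq := Lupd α' i₀ (α i₀)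
          rw [hupdeq, hJα']
          rw [Function.update_of_ne (fun hcon => hii (hσ0bij.1 hcon))]
          have hih := ih α' hd' i
          rw [hih]
          show g0 i (α' i) = g0 i (Function.update α' i₀ (α i₀) i)
          rw [Function.update_of_ne hii]
    intro α i
    exact key (hammingDist base α) α rfl i
  -- g0 i is bijective.
  have hg0base : ∀ i, g0 i (base i) = y base (σ0 i) := by
    intro i
    show y (Function.update base i (base i)) (σ0 i) = _
    rw [Function.update_eq_self]
  have g0inj : ∀ i, Function.Injective (g0 i) := by
    intro i c c' hcc
    by_contra hne
    rcases eq_or_ne c (base i) with rfl | hcb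
    · rcases eq_or_ne c' (base i) with rfl | hcb'
      · exact hne rfl
      · exact (hJ base i c' hcb').1 (hcc.symm.trans (hg0base i))
    · rcases eq_or_ne c' (base i) with rfl | hcb'
      · exact (hJ base i c hcb).1 (hcc.trans (hg0base i))
      · have h1 : y (Function.update base i c) = y (Function.update base i c') := by
          funext k
          rcases eq_or_ne k (J base i) with rfl | hk
          · exact hcc
          · rw [(hJ base i c hcb).2 k hk, (hJ base i c' hcb').2 k hk]
        have h2 := y.injective h1
        exact hne (by simpa using congrFun h2 i)
  refine ⟨fun i => Equiv.ofBijective (g0 i) (Finite.injective_iff_bijective.mp (g0inj i)),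
    Equiv.ofBijective σ0 hσ0bij, ?_⟩
  set σ := Equiv.ofBijective σ0 hσ0bij with hσ
  apply Equiv.ext
  intro α
  funext k
  have h := main α (σ⁻¹ k)
  have hk : σ0 (σ⁻¹ k) = k := σ.apply_symm_apply k
  rw [hk] at h
  exact h
end Aux3

section Aux4
open Finset Function
variable {I : Type*} [Fintype I] [DecidableEq I] {q : ℕ}

lemma cnt_reindex {J : Type*} [Fintype J] [DecidableEq J] (α : J → Fin q) (e : I ≃ J)
    (a : Fin q) : cnt (fun i => α (e i)) a = cnt α a := by
  unfold cnt
  apply Finset.card_bij (fun i _ => e i)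
  · intro i hi; simp_all
  · intro i _ j _ hij; exact e.injective hij
  · intro j hj; exact ⟨e.symm j, by simp_all, by simp⟩

lemma cnt_snd (p : ℕ) (a : Fin q) : cnt (Prod.snd : Fin p × Fin q → Fin q) a = p := by
  unfold cnt
  rw [← Fintype.card_subtype]
  rw [Fintype.card_congr (⟨fun x => x.1.1, fun j => ⟨(j, a), rfl⟩,
    fun x => Subtype.ext (Prod.ext rfl x.2.symm), fun j => rfl⟩ :
      {x : Fin p × Fin q // x.2 = a} ≃ Fin p)]
  exact Fintype.card_fin p

lemma exists_of_cnt_pos {α : I → Fin q} {a : Fin q} (h : 0 < cnt α a) : ∃ i, α i = a := by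
  unfold cnt at h
  rw [Finset.card_pos] at h
  obtain ⟨i, hi⟩ := h
  exact ⟨i, by simpa using hi⟩

lemma exists_allCode_pair {p : ℕ} {α : I → Fin q} (hα : α ∈ allCode I q p) (hp : 0 < p)
    {i j : I} (hij : i ≠ j) {c d : Fin q} (hcd : c ≠ d) :
    ∃ β ∈ allCode I q p, β i = c ∧ β j = d := by
  obtain ⟨i', hi'⟩ := exists_of_cnt_pos (a := c) (by rw [hα c]; exact hp)
  obtain ⟨j', hj'⟩ := exists_of_cnt_pos (a := d) (by rw [hα d]; exact hp)
  have hij' : i' ≠ j' := fun h => hcd (by rw [← hi', ← hj', h])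
  obtain ⟨τ, hτi, hτj⟩ := exists_perm_pair hij hij'
  refine ⟨fun k => α (τ k), fun a => by rw [cnt_comp_equiv]; exact hα a, ?_, ?_⟩
  · show α (τ i) = c
    rw [hτi]; exact hi'
  · show α (τ j) = d
    rw [hτj]; exact hj'

lemma cnt_tvp' (g : I → Equiv.Perm (Fin q)) (σ : Equiv.Perm I) (γ : I → Fin q) (a : Fin q) :
    cnt (tvp g σ γ) a = (Finset.univ.filter fun k => g k (γ k) = a).card := by
  have happ : ∀ m, tvp g σ γ m = g (σ⁻¹ m) (γ (σ⁻¹ m)) := fun _ => rfl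
  unfold cnt
  apply Finset.card_bij (fun m _ => σ⁻¹ m)
  · intro m hm; simp only [Finset.mem_filter, Finset.mem_univ, true_and, happ] at hm ⊢
    exact hm
  · intro m _ m' _ h; exact σ⁻¹.injective h
  · intro k hk
    refine ⟨σ k, Finset.mem_filter.mpr ⟨Finset.mem_univ _, ?_⟩, by simp⟩
    simp only [Finset.mem_filter, Finset.mem_univ, true_and] at hk
    simpa [happ] using hk

/-- Stage B: if `tvp g σ` stabilises `All(pq,q)` then the letter permutations are all equal. -/
lemma tvp_allCode_diag {p : ℕ} (hq : 2 ≤ q) (hp : 0 < p)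
    {α₀ : I → Fin q} (hα₀ : α₀ ∈ allCode I q p)
    {g : I → Equiv.Perm (Fin q)} {σ : Equiv.Perm I}
    (hst : ∀ α ∈ allCode I q p, tvp g σ α ∈ allCode I q p) :
    ∀ i j, g i = g j := by
  intro i j
  rcases eq_or_ne i j with rfl | hij
  · rfl
  apply Equiv.ext
  intro c
  by_contra hgc
  set a := g i c with ha
  have hd : otherL hq c ≠ c := otherL_ne hq c
  obtain ⟨α, hα, hαi, hαj⟩ := exists_allCode_pair hα₀ hp hij (Ne.symm hd)
  set β : I → Fin q := fun k => α (Equiv.swap i j k) with hβ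
  have hβAll : β ∈ allCode I q p := fun b => by
    show cnt (fun k => α (Equiv.swap i j k)) b = p
    rw [cnt_comp_equiv]; exact hα b
  have hβi : β i = otherL hq c := by
    show α (Equiv.swap i j i) = _
    rw [Equiv.swap_apply_left]; exact hαj
  have hβj : β j = c := by
    show α (Equiv.swap i j j) = _
    rw [Equiv.swap_apply_right]; exact hαi
  have hcα : cnt (tvp g σ α) a = p := hst α hα a
  have hcβ : cnt (tvp g σ β) a = p := hst β hβAll a
  rw [cnt_tvp'] at hcα hcβ
  -- convert to sums
  have hsum : ∀ γ : I → Fin q, (Finset.univ.filter fun k => g k (γ k) = a).card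
      = ∑ k, (if g k (γ k) = a then 1 else 0) := by
    intro γ; rw [Finset.card_filter]
  rw [hsum] at hcα hcβ
  have hsplit : ∀ γ : I → Fin q,
      (∑ k, (if g k (γ k) = a then 1 else 0))
        = (∑ k ∈ (Finset.univ.erase i).erase j, (if g k (γ k) = a then 1 else 0))
          + (if g j (γ j) = a then 1 else 0) + (if g i (γ i) = a then 1 else 0) := by
    intro γ
    rw [Finset.sum_erase_add _ _ (Finset.mem_erase.mpr ⟨Ne.symm hij, Finset.mem_univ j⟩),
      Finset.sum_erase_add _ _ (Finset.mem_univ i)]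
  rw [hsplit] at hcα hcβ
  have hrest : (∑ k ∈ (Finset.univ.erase i).erase j, (if g k (α k) = a then 1 else 0))
      = ∑ k ∈ (Finset.univ.erase i).erase j, (if g k (β k) = a then 1 else 0) := by
    apply Finset.sum_congr rfl
    intro k hk
    simp only [Finset.mem_erase] at hk
    have : β k = α k := by
      show α (Equiv.swap i j k) = α k
      rw [Equiv.swap_apply_of_ne_of_ne hk.2.1 hk.1]
    rw [this]
  rw [hαi, hαj] at hcα
  rw [hβi, hβj] at hcβ
  rw [hrest] at hcα
  -- now pure arithmetic with the four indicators
  have h1 : g i c = a := rfl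
  have h2 : g i (otherL hq c) ≠ a := fun h => hd ((g i).injective (h.trans h1.symm))
  have h3 : g j c ≠ a := fun h => hgc (h.trans h1.symm).symm
  simp only [h1, if_pos, if_true] at hcα hcβ
  rw [if_neg h2, if_neg h3] at hcβ
  by_cases h4 : g j (otherL hq c) = a
  · rw [if_pos h4] at hcα
    omega
  · rw [if_neg h4] at hcα
    omega

end Aux4

section Aux5
open Finset Function
variable {I : Type*} [Fintype I] [DecidableEq I] {q : ℕ}

lemma distC_le {γ β : I → Fin q} {C : Set (I → Fin q)} (hβ : β ∈ C) :
    distC γ C ≤ hammingDist γ β :=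
  Nat.sInf_le ⟨β, hβ, rfl⟩

lemma distC_eq_zero_of_mem {γ : I → Fin q} {C : Set (I → Fin q)} (hγ : γ ∈ C) :
    distC γ C = 0 :=
  Nat.le_zero.mp (by simpa using distC_le (γ := γ) hγ)

lemma mem_of_distC_eq_zero {γ : I → Fin q} {C : Set (I → Fin q)} (hC : C.Nonempty)
    (h : distC γ C = 0) : γ ∈ C := by
  have hne : {d | ∃ β ∈ C, hammingDist γ β = d}.Nonempty := by
    obtain ⟨β, hβ⟩ := hC
    exact ⟨hammingDist γ β, β, hβ, rfl⟩
  have := Nat.sInf_mem hne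
  rw [show sInf {d | ∃ β ∈ C, hammingDist γ β = d} = distC γ C from rfl, h] at this
  obtain ⟨β, hβ, hd⟩ := this
  rwa [hammingDist_eq_zero.mp hd]

lemma distC_eq_one {γ β : I → Fin q} {C : Set (I → Fin q)} (hβ : β ∈ C)
    (hd : hammingDist γ β = 1) (hγ : γ ∉ C) : distC γ C = 1 := by
  have h1 : distC γ C ≤ 1 := hd ▸ distC_le hβ
  have h0 : distC γ C ≠ 0 := fun h => hγ (mem_of_distC_eq_zero ⟨β, hβ⟩ h)
  omega

lemma distC_eq_one_elim {γ : I → Fin q} {C : Set (I → Fin q)} (h : distC γ C = 1) :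
    γ ∉ C ∧ ∃ β ∈ C, hammingDist γ β = 1 := by
  have hne : {d | ∃ β ∈ C, hammingDist γ β = d}.Nonempty := by
    by_contra hc
    rw [Set.not_nonempty_iff_eq_empty] at hc
    have : distC γ C = 0 := by unfold distC; rw [hc]; simp
    omega
  have hmem := Nat.sInf_mem hne
  rw [show sInf {d | ∃ β ∈ C, hammingDist γ β = d} = distC γ C from rfl, h] at hmem
  refine ⟨fun hγ => ?_, hmem⟩
  have := distC_eq_zero_of_mem (γ := γ) hγ
  omega

/-- Invariance of the distance to a code under a code-preserving isometry. -/
lemma distC_invariant {x : Equiv.Perm (I → Fin q)} {C : Set (I → Fin q)}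
    (hiso : ∀ α β, hammingDist (x α) (x β) = hammingDist α β)
    (hC : ∀ β, β ∈ C ↔ x β ∈ C) (γ : I → Fin q) :
    distC (x γ) C = distC γ C := by
  unfold distC
  congr 1
  ext d
  constructor
  · rintro ⟨β, hβ, rfl⟩
    refine ⟨x⁻¹ β, ?_, ?_⟩
    · rw [hC (x⁻¹ β)]; simpa using hβ
    · rw [← hiso]; simp
  · rintro ⟨β, hβ, rfl⟩
    exact ⟨x β, (hC β).mp hβ, hiso γ β⟩

lemma allCode_mem_iff_diagL {p : ℕ} {x : Equiv.Perm (I → Fin q)} (hx : x ∈ diagL I q)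
    (β : I → Fin q) : β ∈ allCode I q p ↔ x β ∈ allCode I q p := by
  constructor
  · exact allCode_mem_of_diagL hx
  · intro h
    have := allCode_mem_of_diagL ((diagL I q).inv_mem hx) h
    simpa using this

/-- The stabiliser direction: `Diag ⋊ L ≤ Aut(All)`. -/
lemma diagL_le_autCode (p : ℕ) : diagL I q ≤ autCode (allCode I q p) := by
  intro x hx
  refine ⟨diagL_le_autH hx, ?_⟩
  show x • allCode I q p = allCode I q p
  ext β
  rw [Set.mem_smul_set_iff_inv_smul_mem]
  show x⁻¹ β ∈ allCode I q p ↔ β ∈ allCode I q p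
  exact (allCode_mem_iff_diagL ((diagL I q).inv_mem hx) β).symm

/-- The hard direction: `Aut(All) ≤ Diag ⋊ L` (for `q ≥ 2`, `p ≥ 1`, given a codeword). -/
lemma autCode_le_diagL [Nonempty I] {p : ℕ} (hq : 2 ≤ q) (hp : 0 < p)
    {α₀ : I → Fin q} (hα₀ : α₀ ∈ allCode I q p) :
    autCode (allCode I q p) ≤ diagL I q := by
  rintro y ⟨hyH, hyS⟩
  have hiso := autH_isometry hyH
  obtain ⟨g, σ, rfl⟩ := isometry_classify hq y hiso
  have hst : ∀ α ∈ allCode I q p, tvp g σ α ∈ allCode I q p := by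
    intro α hα
    have : (tvp g σ : Equiv.Perm (I → Fin q)) • allCode I q p = allCode I q p := hyS
    rw [← this]
    exact Set.smul_mem_smul_set hα
  have hdiag := tvp_allCode_diag hq hp hα₀ hst
  obtain ⟨i₀⟩ := ‹Nonempty I›
  rw [mem_diagL_iff]
  refine ⟨g i₀, σ, ?_⟩
  have : g = fun _ => g i₀ := funext fun i => hdiag i i₀
  rw [← this]

end Aux5

section Final
open Finset Function

theorem allCode_neighbour_transitive' (p q : ℕ) (hq : 2 ≤ q) (hp : 0 < p) :
    (∃ X : Subgroup (Equiv.Perm (Fin (p * q) → Fin q)),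
      NbrTransitive X (allCode (Fin (p * q)) q p)) ∧
    autCode (allCode (Fin (p * q)) q p) = diagL (Fin (p * q)) q ∧
    minDist (allCode (Fin (p * q)) q p) = 2 := by
  classical
  have hpq : 0 < p * q := Nat.mul_pos hp (by omega)
  haveI : Nonempty (Fin (p * q)) := ⟨⟨0, hpq⟩⟩
  -- the base codeword
  set α0 : Fin (p * q) → Fin q := fun i => (finProdFinEquiv.symm i).2 with hα0def
  have hα0 : α0 ∈ allCode (Fin (p * q)) q p := by
    intro a
    have h1 : cnt α0 a = cnt (Prod.snd : Fin p × Fin q → Fin q) a :=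
      cnt_reindex (Prod.snd : Fin p × Fin q → Fin q) finProdFinEquiv.symm a
    rw [h1, cnt_snd]
  set c0 : Fin q := ⟨0, by omega⟩ with hc0def
  set c1 : Fin q := ⟨1, by omega⟩ with hc1def
  have hc10 : c1 ≠ c0 := by
    intro hcon
    have := congrArg Fin.val hcon
    simp [hc0def, hc1def] at this
  obtain ⟨k0, hk0⟩ := exists_of_cnt_pos (α := α0) (a := c0) (by rw [hα0 c0]; exact hp)
  obtain ⟨k1, hk1⟩ := exists_of_cnt_pos (α := α0) (a := c1) (by rw [hα0 c1]; exact hp)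
  have hk01 : k0 ≠ k1 := by
    intro h
    rw [h] at hk0
    exact hc10 (hk1.symm.trans hk0)
  -- the neighbour vertex
  set γ0 : Fin (p * q) → Fin q := Function.update α0 k0 c1 with hγ0def
  have hc1k0 : c1 ≠ α0 k0 := by rw [hk0]; exact hc10
  have hγ0c1 : cnt γ0 c1 = p + 1 := by
    rw [hγ0def, cnt_update_self hc1k0, hα0 c1]
  have hγ0c0 : cnt γ0 c0 + 1 = p := by
    have h2 := cnt_update_old (α := α0) (i := k0) (c := c1) hc1k0
    rw [hk0] at h2
    rw [hγ0def, h2]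
    exact hα0 c0
  have hγ0a : ∀ a, a ≠ c1 → a ≠ c0 → cnt γ0 a = p := by
    intro a h1 h0
    rw [hγ0def, cnt_update_other h1 (hk0 ▸ h0), hα0 a]
  have hγ0notC : γ0 ∉ allCode (Fin (p * q)) q p := by
    intro h
    have := h c0
    omega
  have hγ0dist : distC γ0 (allCode (Fin (p * q)) q p) = 1 := by
    refine distC_eq_one hα0 ?_ hγ0notC
    rw [hγ0def]
    exact hd_update_eq_one hc1k0
  -- the orbit of the code
  have horbC : allCode (Fin (p * q)) q p
      = {w | ∃ x ∈ diagL (Fin (p * q)) q, x α0 = w} := by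
    ext β
    constructor
    · intro hβ
      obtain ⟨e, he⟩ := exists_perm_of_cnt_eq
        (α := α0) (β := β) (fun a => by rw [hα0 a, hβ a])
      refine ⟨diagLHom (Fin (p * q)) q (1, e⁻¹), ⟨(1, e⁻¹), rfl⟩, ?_⟩
      funext i
      rw [diagLHom_apply, tvp_apply]
      simp only [inv_inv, Equiv.Perm.coe_one, id_eq]
      exact he i
    · rintro ⟨x, hx, rfl⟩
      exact allCode_mem_of_diagL hx hα0
  -- the orbit of the cell C_1
  have horb1 : cell (allCode (Fin (p * q)) q p) 1
      = {w | ∃ x ∈ diagL (Fin (p * q)) q, x γ0 = w} := by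
    ext γ
    constructor
    · intro hγ
      obtain ⟨hγnot, β, hβ, hd1⟩ := distC_eq_one_elim hγ
      obtain ⟨i₀, hne, hall⟩ := hd_eq_one_iff.mp hd1
      have hupd : γ = Function.update β i₀ (γ i₀) := by
        funext j
        rcases eq_or_ne j i₀ with rfl | hj
        · rw [Function.update_self]
        · rw [Function.update_of_ne hj]
          exact hall j hj
      have hγc : cnt γ (γ i₀) = p + 1 := by
        have hx := cnt_update_self (α := β) (i := i₀) (c := γ i₀) hne
        rw [← hupd] at hx
        rw [hx, hβ]
      have hγb : cnt γ (β i₀) + 1 = p := by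
        have hx := cnt_update_old (α := β) (i := i₀) (c := γ i₀) hne
        rw [← hupd] at hx
        rw [hβ] at hx
        exact hx
      have hγa : ∀ a, a ≠ γ i₀ → a ≠ β i₀ → cnt γ a = p := by
        intro a h1 h2
        have hx := cnt_update_other (α := β) (i := i₀) (c := γ i₀) h1 h2
        rw [← hupd] at hx
        rw [hx, hβ]
      obtain ⟨h, hh1, hh0⟩ := exists_perm_pair hc10 hne
      have hcnt : ∀ a, cnt (fun k => h (γ0 k)) a = cnt γ a := by
        intro a
        rw [cnt_postcomp]
        rcases eq_or_ne a (γ i₀) with rfl | h1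
        · have hinv : h⁻¹ (γ i₀) = c1 := by rw [← hh1]; simp
          rw [hinv, hγ0c1, hγc]
        · rcases eq_or_ne a (β i₀) with rfl | h2
          · have hinv : h⁻¹ (β i₀) = c0 := by rw [← hh0]; simp
            rw [hinv]
            omega
          · have ha1 : h⁻¹ a ≠ c1 := fun hcon => h1 (by rw [← hh1, ← hcon]; simp)
            have ha0 : h⁻¹ a ≠ c0 := fun hcon => h2 (by rw [← hh0, ← hcon]; simp)
            rw [hγ0a _ ha1 ha0, hγa a h1 h2]
      obtain ⟨e, he⟩ := exists_perm_of_cnt_eq hcnt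
      refine ⟨diagLHom (Fin (p * q)) q (h, e⁻¹), ⟨(h, e⁻¹), rfl⟩, ?_⟩
      funext i
      rw [diagLHom_apply, tvp_apply]
      simp only [inv_inv]
      exact he i
    · rintro ⟨x, hx, rfl⟩
      show distC (x γ0) (allCode (Fin (p * q)) q p) = 1
      obtain ⟨h, σ, rfl⟩ := (mem_diagL_iff x).mp hx
      rw [distC_invariant (tvp_isometry (fun _ => h) σ)
        (allCode_mem_iff_diagL ((mem_diagL_iff _).mpr ⟨h, σ, rfl⟩)) γ0]
      exact hγ0dist
  refine ⟨⟨diagL (Fin (p * q)) q, diagL_le_autH, ⟨α0, horbC⟩, ⟨γ0, horb1⟩⟩, ?_, ?_⟩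
  · exact le_antisymm (autCode_le_diagL hq hp hα0) (diagL_le_autCode p)
  -- minimum distance
  · set β2 : Fin (p * q) → Fin q := fun k => α0 (Equiv.swap k0 k1 k) with hβ2def
    have hβ2All : β2 ∈ allCode (Fin (p * q)) q p := by
      intro a
      rw [hβ2def, cnt_comp_equiv, hα0]
    have hβ2k0 : β2 k0 = c1 := by
      rw [hβ2def]
      show α0 (Equiv.swap k0 k1 k0) = c1
      rw [Equiv.swap_apply_left]; exact hk1
    have hβ2k1 : β2 k1 = c0 := by
      rw [hβ2def]
      show α0 (Equiv.swap k0 k1 k1) = c0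
      rw [Equiv.swap_apply_right]; exact hk0
    have hd2 : hammingDist α0 β2 = 2 := by
      rw [hd_def]
      rw [show (Finset.univ.filter fun k => α0 k ≠ β2 k) = {k0, k1} by
        ext k
        rcases eq_or_ne k k0 with rfl | h0
        · simp only [Finset.mem_filter, Finset.mem_univ, true_and, Finset.mem_insert,
            Finset.mem_singleton]
          rw [hk0, hβ2k0]
          simp [Ne.symm hc10]
        · rcases eq_or_ne k k1 with rfl | h1
          · simp only [Finset.mem_filter, Finset.mem_univ, true_and, Finset.mem_insert,
              Finset.mem_singleton]
            rw [hk1, hβ2k1]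
            simp [hc10]
          · have : β2 k = α0 k := by
              rw [hβ2def]
              show α0 (Equiv.swap k0 k1 k) = α0 k
              rw [Equiv.swap_apply_of_ne_of_ne h0 h1]
            simp [this, h0, h1]]
      rw [Finset.card_insert_of_notMem (by simpa using hk01), Finset.card_singleton]
    have hne2 : α0 ≠ β2 := by
      intro h
      have := congrFun h k0
      rw [hk0, hβ2k0] at this
      exact hc10 this.symm
    have h2mem : 2 ∈ {d | ∃ β ∈ allCode (Fin (p * q)) q p,
        ∃ γ ∈ allCode (Fin (p * q)) q p, β ≠ γ ∧ hammingDist β γ = d} :=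
      ⟨α0, hα0, β2, hβ2All, hne2, hd2⟩
    have hlb : ∀ d ∈ {d | ∃ β ∈ allCode (Fin (p * q)) q p,
        ∃ γ ∈ allCode (Fin (p * q)) q p, β ≠ γ ∧ hammingDist β γ = d}, 2 ≤ d := by
      rintro d ⟨β, hβ, γ, hγ, hbg, hd⟩
      rcases Nat.lt_or_ge d 2 with hlt | hge
      · exfalso
        interval_cases d
        · exact hbg (hammingDist_eq_zero.mp hd)
        · obtain ⟨i, hnei, halli⟩ := hd_eq_one_iff.mp hd
          have hupd : γ = Function.update β i (γ i) := by
            funext j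
            rcases eq_or_ne j i with rfl | hj
            · rw [Function.update_self]
            · rw [Function.update_of_ne hj]
              exact (halli j hj).symm
          have hne' : γ i ≠ β i := Ne.symm hnei
          have h1 : cnt γ (γ i) = p + 1 := by
            have hx := cnt_update_self (α := β) (i := i) (c := γ i) hne'
            rw [← hupd] at hx
            rw [hx, hβ]
          have h2 : cnt γ (γ i) = p := hγ (γ i)
          omega
      · exact hge
    exact le_antisymm (Nat.sInf_le h2mem) (le_csInf ⟨2, h2mem⟩ hlb)

end Final

/-- Theorem 3.3(iv): for `m = pq`, the code `All(pq,q)` of all vertices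
in which every letter occurs exactly `p` times is neighbour transitive,
`Aut(All(pq,q)) = Diag_m(S_q) ⋊ L`, and its minimum distance is `2`. -/
theorem allCode_neighbour_transitive (p q : ℕ) (hq : 2 ≤ q) (hp : 0 < p) :
    (∃ X : Subgroup (Equiv.Perm (Fin (p * q) → Fin q)),
      NbrTransitive X (allCode (Fin (p * q)) q p)) ∧
    autCode (allCode (Fin (p * q)) q p) = diagL (Fin (p * q)) q ∧
    minDist (allCode (Fin (p * q)) q p) = 2 := by
  exact allCode_neighbour_transitive' p q hq hp
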